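/- Let n \ge 2 be an integer. Then the set D \subset \mathbb{R}^2 of pairs (u, s) with u > 0 satisfying all of: (i) s > 1 + \max(u - 1, nu - n); (ii) if u \le 1 then s > 0, and if u > 1 then s > nu - \min(n, 1/(u-1)); (iii) if nu \ge 3 + \sqrt{8} then s > (nu + 3 + \sqrt{(nu-3)^2 - 8})/2 or s < (nu + 3 - \sqrt{(nu-3)^2 - 8})/2; is not convex, i.e. there exist points P, Q in D whose midpoint is not in D. -/

import Mathlib

/-- For `n ≥ 2` the parameter domain of the Direct Regularity Theorem for a
boundary operator of class `r = 1`, in coordinates `(u, s)` with `u = 1/p`,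
is not convex: there are two points of the domain whose midpoint lies
outside it. -/
theorem domain_not_convex (n : ℕ) (hn : 2 ≤ n) :
    ∃ P Q : ℝ × ℝ,
      P ∈ {R : ℝ × ℝ | 0 < R.1 ∧
        R.2 > 1 + max (R.1 - 1) ((n : ℝ) * R.1 - n) ∧
        ((R.1 ≤ 1 → R.2 > 0) ∧
         (1 < R.1 → R.2 > (n : ℝ) * R.1 - min (n : ℝ) (1 / (R.1 - 1)))) ∧
        (3 + Real.sqrt 8 ≤ (n : ℝ) * R.1 →
          R.2 > ((n : ℝ) * R.1 + 3 +
            Real.sqrt (((n : ℝ) * R.1 - 3) ^ 2 - 8)) / 2 ∨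
          R.2 < ((n : ℝ) * R.1 + 3 -
            Real.sqrt (((n : ℝ) * R.1 - 3) ^ 2 - 8)) / 2)} ∧
      Q ∈ {R : ℝ × ℝ | 0 < R.1 ∧
        R.2 > 1 + max (R.1 - 1) ((n : ℝ) * R.1 - n) ∧
        ((R.1 ≤ 1 → R.2 > 0) ∧
         (1 < R.1 → R.2 > (n : ℝ) * R.1 - min (n : ℝ) (1 / (R.1 - 1)))) ∧
        (3 + Real.sqrt 8 ≤ (n : ℝ) * R.1 →
          R.2 > ((n : ℝ) * R.1 + 3 +
            Real.sqrt (((n : ℝ) * R.1 - 3) ^ 2 - 8)) / 2 ∨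
          R.2 < ((n : ℝ) * R.1 + 3 -
            Real.sqrt (((n : ℝ) * R.1 - 3) ^ 2 - 8)) / 2)} ∧
      (1 / 2 : ℝ) • P + (1 / 2 : ℝ) • Q ∉ {R : ℝ × ℝ | 0 < R.1 ∧
        R.2 > 1 + max (R.1 - 1) ((n : ℝ) * R.1 - n) ∧
        ((R.1 ≤ 1 → R.2 > 0) ∧
         (1 < R.1 → R.2 > (n : ℝ) * R.1 - min (n : ℝ) (1 / (R.1 - 1)))) ∧
        (3 + Real.sqrt 8 ≤ (n : ℝ) * R.1 →
          R.2 > ((n : ℝ) * R.1 + 3 +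
            Real.sqrt (((n : ℝ) * R.1 - 3) ^ 2 - 8)) / 2 ∨
          R.2 < ((n : ℝ) * R.1 + 3 -
            Real.sqrt (((n : ℝ) * R.1 - 3) ^ 2 - 8)) / 2)} := by
  set m : ℝ := (n : ℝ) with hm
  have hm2 : (2 : ℝ) ≤ m := by rw [hm]; exact_mod_cast hn
  have hm0 : (0 : ℝ) < m := by linarith
  have hmne : m ≠ 0 := ne_of_gt hm0
  have hsqrt8 : Real.sqrt 8 ≤ 3 := by
    rw [show (3:ℝ) = Real.sqrt 9 by
      rw [show (9:ℝ) = 3^2 by norm_num, Real.sqrt_sq]; norm_num]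
    exact Real.sqrt_le_sqrt (by norm_num)
  refine ⟨(1/m, 3/4), ((2*m+80)/m, 2*m+80), ?_, ?_, ?_⟩
  · -- P membership
    have hP1 : m * (1/m) = 1 := by field_simp
    refine ⟨by positivity, ?_, ⟨fun _ => by norm_num, fun h => ?_⟩, fun h => ?_⟩
    · simp only [hP1]
      have h1 : 1/m ≤ 1/2 := by
        rw [div_le_div_iff₀ hm0 (by norm_num)]; linarith
      have h2 : (1:ℝ) - m ≤ 1/m - 1 := by nlinarith
      rw [max_eq_left h2]
      linarith
    · exfalso
      have : 1/m ≤ 1/2 := by rw [div_le_div_iff₀ hm0 (by norm_num)]; linarith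
      linarith
    · exfalso
      rw [hP1] at h
      have := Real.sqrt_nonneg (8:ℝ)
      linarith
  · -- Q membership
    have hQ1 : m * ((2*m+80)/m) = 2*m+80 := by field_simp
    have hu1 : (1:ℝ) < (2*m+80)/m := by
      rw [lt_div_iff₀ hm0]; linarith
    refine ⟨by positivity, ?_, ⟨fun h => absurd h (not_le.mpr hu1), fun _ => ?_⟩, fun _ => ?_⟩
    · rw [hQ1]
      have hle : (2*m+80)/m - 1 ≤ 2*m+80 - m := by
        rw [div_sub' hmne, div_le_iff₀ hm0]
        nlinarith
      rcases max_cases ((2*m+80)/m - 1) (2*m+80 - m) with ⟨he, _⟩ | ⟨he, _⟩ <;> rw [he] <;>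
        [linarith; linarith]
    · rw [hQ1]
      have hmin : 0 < min m (1 / ((2*m+80)/m - 1)) := by
        apply lt_min hm0
        apply div_pos one_pos
        linarith
      linarith
    · left
      rw [hQ1]
      have hlt : Real.sqrt ((2*m+80 - 3)^2 - 8) < 2*m + 80 - 3 := by
        rw [Real.sqrt_lt' (by linarith)]
        linarith
      linarith
  · -- midpoint not in set
    intro hmem
    obtain ⟨-, -, -, h3⟩ := hmem
    simp only [Prod.smul_mk, Prod.mk_add_mk, smul_eq_mul] at h3
    have hx : m * (1/2 * (1/m) + 1/2 * ((2*m+80)/m)) = m + 81/2 := by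
      field_simp; ring
    rw [hx] at h3
    have hy : (1/2 * (3/4) + 1/2 * (2*m+80) : ℝ) = m + 40 + 3/8 := by ring
    have happ : 3 + Real.sqrt 8 ≤ m + 81/2 := by linarith
    have hs : Real.sqrt ((m + 81/2 - 3)^2 - 8) = Real.sqrt ((m + 75/2)^2 - 8) := by
      congr 1; ring
    have hkey : m + 149/4 ≤ Real.sqrt ((m + 75/2)^2 - 8) := by
      rw [show (m + 149/4 : ℝ) = Real.sqrt ((m + 149/4)^2) by
        rw [Real.sqrt_sq (by linarith)]]
      apply Real.sqrt_le_sqrt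
      nlinarith
    have hnn : 0 ≤ Real.sqrt ((m + 75/2)^2 - 8) := Real.sqrt_nonneg _
    rcases h3 happ with h | h
    · rw [hy, hs] at h; linarith
    · rw [hy, hs] at h; linarith
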